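/- For every real M ≥ 2 there exists a constant C > 0 (depending only on M) such that for all r > 0 and all σ ≥ 1: ∫_{{η ∈ ℝ : |η − r/σ| ≤ r/(2σ)}} (1 + |r − ση|)^{−M} e^{−η²/2} dη ≤ C σ^{−1} e^{−r²/(8σ²)}. -/

import Mathlib

open Real MeasureTheory

/-- The near-peak part of the Gaussian-weighted integral:
`∫_{|η−r/σ|≤r/2σ} (1+|r−ση|)^{−M} e^{−η²/2} dη ≤ C σ⁻¹ e^{−r²/8σ²}`. -/
theorem gaussian_shifted_weight_near_peak :
    ∀ M : ℝ, 2 ≤ M → ∃ C : ℝ, 0 < C ∧ ∀ r : ℝ, 0 < r → ∀ σ : ℝ, 1 ≤ σ →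
      ∫ η in {η : ℝ | |η - r / σ| ≤ r / (2 * σ)},
          (1 + |r - σ * η|) ^ (-M) * Real.exp (-η ^ 2 / 2) ≤
        C * σ⁻¹ * Real.exp (-r ^ 2 / (8 * σ ^ 2)) := by
  intro M hM
  have hInt : Integrable (fun u : ℝ => (1 + |u|) ^ (-(2:ℝ))) := by
    have := integrable_one_add_norm (E := ℝ) (μ := volume) (r := 2) (by norm_num)
    simpa [Real.norm_eq_abs] using this
  set I : ℝ := ∫ u : ℝ, (1 + |u|) ^ (-(2:ℝ)) with hIdef
  have hInonneg : 0 ≤ I :=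
    integral_nonneg fun u => Real.rpow_nonneg (by positivity) _
  refine ⟨I + 1, by linarith, ?_⟩
  intro r hr σ hσ
  have hσ0 : 0 < σ := lt_of_lt_of_le one_pos hσ
  set S : Set ℝ := {η : ℝ | |η - r / σ| ≤ r / (2 * σ)} with hSdef
  set E : ℝ := Real.exp (-r ^ 2 / (8 * σ ^ 2)) with hEdef
  have hE : 0 < E := Real.exp_pos _
  set g : ℝ → ℝ := fun η => (1 + |σ * η - r|) ^ (-(2:ℝ)) * E with hgdef
  set f : ℝ → ℝ := fun η => (1 + |r - σ * η|) ^ (-M) * Real.exp (-η ^ 2 / 2)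
    with hfdef
  have hSmeas : MeasurableSet S := by
    apply measurableSet_le <;> fun_prop
  -- integrability of g
  have hgInt : Integrable g := by
    have h1 : Integrable (fun x : ℝ => (1 + |x - r|) ^ (-(2:ℝ))) :=
      hInt.comp_sub_right r
    have h2 : Integrable (fun η : ℝ => (1 + |σ * η - r|) ^ (-(2:ℝ))) :=
      h1.comp_mul_left' hσ0.ne'
    exact h2.mul_const E
  -- pointwise bound on S
  have hbound : ∀ η ∈ S, f η ≤ g η := by
    intro η hη
    have hη' : |η - r / σ| ≤ r / (2 * σ) := hη
    have hηge : r / (2 * σ) ≤ η := by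
      have := abs_le.1 hη'
      have : -(r / (2 * σ)) ≤ η - r / σ := this.1
      have hrs : r / σ = 2 * (r / (2 * σ)) := by field_simp
      linarith [this]
    have hηpos : 0 < η := lt_of_lt_of_le (by positivity) hηge
    have hexp : Real.exp (-η ^ 2 / 2) ≤ E := by
      rw [hEdef]
      apply Real.exp_le_exp.2
      have h1 : r / (2 * σ) ≤ η := hηge
      have h2 : (r / (2 * σ)) ^ 2 ≤ η ^ 2 := by
        apply pow_le_pow_left₀ (by positivity) h1
      have h3 : (r / (2 * σ)) ^ 2 = r ^ 2 / (4 * σ ^ 2) := by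
        field_simp; ring
      rw [h3] at h2
      have h4 : -r ^ 2 / (8 * σ ^ 2) = -(r ^ 2 / (4 * σ ^ 2)) / 2 := by ring
      rw [h4]; linarith
    have hpow : (1 + |r - σ * η|) ^ (-M) ≤ (1 + |σ * η - r|) ^ (-(2:ℝ)) := by
      rw [abs_sub_comm r (σ * η)]
      apply Real.rpow_le_rpow_of_exponent_le
      · linarith [abs_nonneg (σ * η - r)]
      · linarith
    calc f η ≤ (1 + |σ * η - r|) ^ (-(2:ℝ)) * Real.exp (-η ^ 2 / 2) := by
          apply mul_le_mul_of_nonneg_right hpow (Real.exp_nonneg _)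
      _ ≤ g η := by
          apply mul_le_mul_of_nonneg_left hexp
          exact Real.rpow_nonneg (by positivity) _
  -- integrability of f on S
  have hfInt : IntegrableOn f S := by
    refine Integrable.mono' (Integrable.integrableOn hgInt (s := S)) ?_ ?_
    · apply AEStronglyMeasurable.restrict
      apply Continuous.aestronglyMeasurable
      apply Continuous.mul
      · rw [continuous_iff_continuousAt]
        intro x
        exact ContinuousAt.rpow_const
          ((by fun_prop : Continuous fun η : ℝ => 1 + |r - σ * η|).continuousAt)
          (Or.inl (by positivity))
      · fun_prop
    · filter_upwards [ae_restrict_mem hSmeas] with η hη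
      rw [Real.norm_eq_abs, abs_of_nonneg]
      · exact hbound η hη
      · exact mul_nonneg (Real.rpow_nonneg (by positivity) _) (Real.exp_nonneg _)
  -- chain
  have step1 : ∫ η in S, f η ≤ ∫ η in S, g η :=
    setIntegral_mono_on hfInt hgInt.integrableOn hSmeas hbound
  have step2 : ∫ η in S, g η ≤ ∫ η, g η := by
    apply setIntegral_le_integral hgInt
    filter_upwards with η
    exact mul_nonneg (Real.rpow_nonneg (by positivity) _) hE.le
  have step3 : ∫ η, g η = σ⁻¹ * I * E := by
    rw [hgdef]
    rw [integral_mul_const]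
    congr 1
    have : (fun η : ℝ => (1 + |σ * η - r|) ^ (-(2:ℝ)))
        = fun η : ℝ => (fun x : ℝ => (1 + |x - r|) ^ (-(2:ℝ))) (σ * η) := rfl
    rw [this, Measure.integral_comp_mul_left (fun x : ℝ => (1 + |x - r|) ^ (-(2:ℝ))) σ]
    rw [integral_sub_right_eq_self (fun x : ℝ => (1 + |x|) ^ (-(2:ℝ))) r]
    rw [abs_of_pos (inv_pos.2 hσ0), smul_eq_mul]
  have final : σ⁻¹ * I * E ≤ (I + 1) * σ⁻¹ * E := by
    have hσinv : 0 < σ⁻¹ := inv_pos.2 hσ0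
    nlinarith
  calc ∫ η in S, f η ≤ ∫ η in S, g η := step1
    _ ≤ ∫ η, g η := step2
    _ = σ⁻¹ * I * E := step3
    _ ≤ (I + 1) * σ⁻¹ * E := final
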